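/- Let n ≥ 1 be an integer, 0 < R₂ < R₁, p > 2 a real number, t ∈ ℝ, and let f⁺ : [R₂,R₁] → ℝ be continuous. Define F(ρ,t) := (t·R₂ⁿ − ∫_{R₂}^ρ f⁺(r)r^{n−1} dr)/ρⁿ for ρ ∈ [R₂,R₁], and define ū(x) := ∫_{R₂}^{|x|} sgn(F(ρ,t))·|F(ρ,t)·ρ|^{1/(p−1)} dρ for x ∈ ℝⁿ with R₂ ≤ |x| ≤ R₁. Then: (i) ū(x) = 0 whenever |x| = R₂; (ii) ū is differentiable at every x with R₂ < |x| < R₁, with |∇ū(x)|^{p−2}∇ū(x) = F(|x|,t)·x; (iii) the vector field x ↦ F(|x|,t)·x is differentiable on the open annulus {R₂ < |x| < R₁} with divergence equal to −f⁺(|x|). Consequently ū is a radially symmetric classical solution of div(|∇u|^{p−2}∇u) + f⁺ = 0 in the open annulus. -/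

import Mathlib

open Real Set MeasureTheory intervalIntegral

private lemma sign_mul_abs_real (a : ℝ) : Real.sign a * |a| = a := by
  rcases lt_trichotomy a 0 with h | h | h
  · rw [Real.sign_of_neg h, abs_of_neg h]; ring
  · simp [h]
  · rw [Real.sign_of_pos h, abs_of_pos h]; ring

private lemma abs_sign_le_one (a : ℝ) : |Real.sign a| ≤ 1 := by
  rcases Real.sign_apply_eq a with h | h | h <;> rw [h] <;> norm_num

private lemma sign_mul_right_pos (a r : ℝ) (hr : 0 < r) :
    Real.sign (a * r) = Real.sign a := by
  rcases lt_trichotomy a 0 with h | h | h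
  · rw [Real.sign_of_neg h, Real.sign_of_neg (mul_neg_of_neg_of_pos h hr)]
  · simp [h]
  · rw [Real.sign_of_pos h, Real.sign_of_pos (mul_pos h hr)]

private lemma continuous_signPow {α : ℝ} (hα : 0 < α) :
    Continuous (fun s : ℝ => Real.sign s * |s| ^ α) := by
  have habs : Continuous fun s : ℝ => |s| ^ α := by
    rw [continuous_iff_continuousAt]
    intro s
    exact (Real.continuousAt_rpow_const _ _ (Or.inr hα.le)).comp continuous_abs.continuousAt
  rw [continuous_iff_continuousAt]
  intro s
  rcases lt_trichotomy s 0 with h | h | h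
  · refine ContinuousAt.congr (habs.continuousAt.neg) ?_
    filter_upwards [Iio_mem_nhds h] with t ht
    rw [Real.sign_of_neg ht]; simp only [Pi.neg_apply]; ring
  · subst h
    have h0 : (fun s : ℝ => Real.sign s * |s| ^ α) 0 = 0 := by simp
    unfold ContinuousAt
    rw [h0]
    apply squeeze_zero_norm (a := fun t : ℝ => |t| ^ α)
    · intro t
      rw [Real.norm_eq_abs, abs_mul, abs_of_nonneg (Real.rpow_nonneg (abs_nonneg t) α)]
      calc |Real.sign t| * |t| ^ α ≤ 1 * |t| ^ α := by
            exact mul_le_mul_of_nonneg_right (abs_sign_le_one t)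
              (Real.rpow_nonneg (abs_nonneg t) α)
        _ = |t| ^ α := one_mul _
    · have := habs.continuousAt (x := (0:ℝ))
      unfold ContinuousAt at this
      simpa [Real.zero_rpow hα.ne'] using this
  · refine ContinuousAt.congr habs.continuousAt ?_
    filter_upwards [Ioi_mem_nhds h] with t ht
    rw [Real.sign_of_pos ht]; ring

private lemma hasFDerivAt_norm_euclid {n : ℕ} (x : EuclideanSpace ℝ (Fin n)) (hx : x ≠ 0) :
    HasFDerivAt (fun y : EuclideanSpace ℝ (Fin n) => ‖y‖) (‖x‖⁻¹ • innerSL ℝ x) x := by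
  have hnx : ‖x‖ ≠ 0 := norm_ne_zero_iff.2 hx
  have h1 : HasFDerivAt (fun y : EuclideanSpace ℝ (Fin n) => ‖y‖ ^ 2)
      ((2:ℕ) • innerSL ℝ x) x := (hasStrictFDerivAt_norm_sq x).hasFDerivAt
  have h2 : HasDerivAt Real.sqrt (1 / (2 * Real.sqrt (‖x‖ ^ 2))) (‖x‖ ^ 2) :=
    Real.hasDerivAt_sqrt (by positivity)
  have h3 := h2.comp_hasFDerivAt x h1
  have heq : (Real.sqrt ∘ fun y : EuclideanSpace ℝ (Fin n) => ‖y‖ ^ 2) =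
      fun y : EuclideanSpace ℝ (Fin n) => ‖y‖ := by
    funext y; simp [Function.comp, Real.sqrt_sq (norm_nonneg y)]
  rw [heq] at h3
  refine h3.congr_fderiv ?_; symm
  rw [Real.sqrt_sq (norm_nonneg x)]
  ext y
  rw [two_nsmul]
  simp only [ContinuousLinearMap.coe_smul', ContinuousLinearMap.add_apply, Pi.smul_apply,
    smul_eq_mul]
  field_simp
  ring

private lemma trace_smulRight_euclid {n : ℕ}
    (l : EuclideanSpace ℝ (Fin n) →L[ℝ] ℝ) (v : EuclideanSpace ℝ (Fin n)) :
    LinearMap.trace ℝ (EuclideanSpace ℝ (Fin n)) (l.smulRight v).toLinearMap = l v := by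
  have h : (l.smulRight v).toLinearMap =
      dualTensorHom ℝ (EuclideanSpace ℝ (Fin n)) (EuclideanSpace ℝ (Fin n))
        ((l : EuclideanSpace ℝ (Fin n) →ₗ[ℝ] ℝ) ⊗ₜ[ℝ] v) := by
    ext m; simp
  rw [h, LinearMap.trace_eq_contract_apply, contractLeft_apply]
  rfl

/-- Explicit radially symmetric solution of `div(|∇u|^{p-2}∇u) + f⁺ = 0` on the open
annulus `{R₂ < |x| < R₁}` (Theorem 1.1, annulus case `R₁ > R₂`), for an arbitrary
choice of the free constant `t`. -/
theorem pLaplacian_explicit_solution_annulus (n : ℕ) (hn : 1 ≤ n)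
    (R₂ R₁ : ℝ) (hR₂ : 0 < R₂) (hR : R₂ < R₁) (p : ℝ) (hp : 2 < p) (t : ℝ)
    (f : ℝ → ℝ) (hf : ContinuousOn f (Set.Icc R₂ R₁))
    (F : ℝ → ℝ)
    (hF : ∀ ρ, F ρ = (t * R₂ ^ n - ∫ r in R₂..ρ, f r * r ^ (n - 1)) / ρ ^ n)
    (u : EuclideanSpace ℝ (Fin n) → ℝ)
    (hu : ∀ x, u x = ∫ ρ in R₂..‖x‖,
      Real.sign (F ρ) * |F ρ * ρ| ^ (1 / (p - 1))) :
    -- (i) boundary condition on the inner sphere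
    (∀ x : EuclideanSpace ℝ (Fin n), ‖x‖ = R₂ → u x = 0) ∧
    -- (ii) differentiability and flux identity
    (∀ x : EuclideanSpace ℝ (Fin n), R₂ < ‖x‖ → ‖x‖ < R₁ →
      DifferentiableAt ℝ u x ∧
      ‖gradient u x‖ ^ (p - 2) • gradient u x = F ‖x‖ • x) ∧
    -- (iii) the flux field is differentiable with divergence `-f⁺(|x|)`
    (∀ x : EuclideanSpace ℝ (Fin n), R₂ < ‖x‖ → ‖x‖ < R₁ →
      DifferentiableAt ℝ (fun y : EuclideanSpace ℝ (Fin n) => F ‖y‖ • y) x ∧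
      LinearMap.trace ℝ (EuclideanSpace ℝ (Fin n))
        (fderiv ℝ (fun y : EuclideanSpace ℝ (Fin n) => F ‖y‖ • y) x).toLinearMap
        = -(f ‖x‖)) := by
  obtain ⟨m, rfl⟩ : ∃ m, n = m + 1 := ⟨n - 1, (Nat.succ_pred_eq_of_pos hn).symm⟩
  have hp1 : (0:ℝ) < p - 1 := by linarith
  have hα : 0 < 1 / (p - 1) := by positivity
  set g : ℝ → ℝ := fun ρ => Real.sign (F ρ) * |F ρ * ρ| ^ (1 / (p - 1)) with hgdef
  have hw : ContinuousOn (fun r : ℝ => f r * r ^ (m + 1 - 1)) (Icc R₂ R₁) :=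
    hf.mul (continuous_pow _).continuousOn
  have hwint : IntervalIntegrable (fun r : ℝ => f r * r ^ (m + 1 - 1)) volume R₂ R₁ := by
    apply ContinuousOn.intervalIntegrable
    rwa [uIcc_of_le hR.le]
  have hIc : ContinuousOn (fun ρ : ℝ => ∫ r in R₂..ρ, f r * r ^ (m + 1 - 1)) (Icc R₂ R₁) := by
    have := intervalIntegral.continuousOn_primitive_interval' hwint left_mem_uIcc
    rwa [uIcc_of_le hR.le] at this
  have hFeq : F = fun ρ =>
      (t * R₂ ^ (m + 1) - ∫ r in R₂..ρ, f r * r ^ (m + 1 - 1)) / ρ ^ (m + 1) := funext hF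
  have hFc : ContinuousOn F (Icc R₂ R₁) := by
    rw [hFeq]
    exact (continuousOn_const.sub hIc).div ((continuous_pow _).continuousOn)
      (fun ρ hρ => pow_ne_zero _ (lt_of_lt_of_le hR₂ hρ.1).ne')
  have hgc : ContinuousOn g (Icc R₂ R₁) := by
    apply ContinuousOn.congr
      ((continuous_signPow hα).comp_continuousOn (hFc.mul continuousOn_id))
    intro ρ hρ
    have hρ0 : 0 < ρ := lt_of_lt_of_le hR₂ hρ.1
    show g ρ = Real.sign (F ρ * ρ) * |F ρ * ρ| ^ (1 / (p - 1))
    rw [hgdef, sign_mul_right_pos _ _ hρ0]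
  refine ⟨fun x hx => by rw [hu x, hx, intervalIntegral.integral_same], ?_, ?_⟩
  · -- part (ii)
    intro x hx1 hx2
    have hρ0 : 0 < ‖x‖ := lt_trans hR₂ hx1
    have hx0 : x ≠ 0 := fun h => by rw [h, norm_zero] at hρ0; exact lt_irrefl _ hρ0
    have hnormD := hasFDerivAt_norm_euclid x hx0
    have hGd : HasDerivAt (fun s => ∫ ρ in R₂..s, g ρ) (g ‖x‖) ‖x‖ := by
      apply intervalIntegral.integral_hasDerivAt_right
      · apply ContinuousOn.intervalIntegrable
        apply hgc.mono
        rw [uIcc_of_le hx1.le]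
        exact Icc_subset_Icc le_rfl hx2.le
      · exact ContinuousAt.stronglyMeasurableAtFilter isOpen_Ioo
          (fun s hs => hgc.continuousAt (Icc_mem_nhds hs.1 hs.2)) ‖x‖ ⟨hx1, hx2⟩
      · exact hgc.continuousAt (Icc_mem_nhds hx1 hx2)
    have hufd : HasFDerivAt u (g ‖x‖ • (‖x‖⁻¹ • innerSL ℝ x)) x := by
      have h3 := hGd.comp_hasFDerivAt x hnormD
      have hueq : u = (fun s => ∫ ρ in R₂..s, g ρ) ∘
          fun y : EuclideanSpace ℝ (Fin (m + 1)) => ‖y‖ := funext fun y => hu y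
      rw [hueq]
      exact h3
    have hgrad : HasGradientAt u ((g ‖x‖ * ‖x‖⁻¹) • x) x := by
      rw [hasGradientAt_iff_hasFDerivAt]
      refine hufd.congr_fderiv ?_; symm
      ext y
      simp only [InnerProductSpace.toDual_apply_apply, real_inner_smul_left,
        ContinuousLinearMap.coe_smul', Pi.smul_apply, innerSL_apply_apply, smul_eq_mul]
      ring
    refine ⟨hufd.differentiableAt, ?_⟩
    rw [hgrad.gradient, norm_smul, Real.norm_eq_abs, smul_smul]
    have hsc : (|g ‖x‖ * ‖x‖⁻¹| * ‖x‖) ^ (p - 2) * (g ‖x‖ * ‖x‖⁻¹) = F ‖x‖ := by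
      have habs1 : |g ‖x‖ * ‖x‖⁻¹| * ‖x‖ = |g ‖x‖| := by
        rw [abs_mul, abs_of_pos (inv_pos.2 hρ0), mul_assoc,
          inv_mul_cancel₀ hρ0.ne', mul_one]
      rw [habs1]
      rcases eq_or_ne (F ‖x‖) 0 with hF0 | hF0
      · have hg0 : g ‖x‖ = 0 := by rw [hgdef]; simp [hF0]
        rw [hg0, hF0]
        simp [Real.zero_rpow (by linarith : p - 2 ≠ 0)]
      · set A : ℝ := |F ‖x‖ * ‖x‖| with hAdef
        have hA : 0 < A := abs_pos.2 (mul_ne_zero hF0 hρ0.ne')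
        have hgval : g ‖x‖ = Real.sign (F ‖x‖) * A ^ (1 / (p - 1)) := rfl
        have habsg : |g ‖x‖| = A ^ (1 / (p - 1)) := by
          rw [hgval, abs_mul, abs_of_nonneg (Real.rpow_nonneg hA.le _)]
          rcases Real.sign_apply_eq_of_ne_zero _ hF0 with hs | hs <;> rw [hs] <;> norm_num
        have hcomb : A ^ (1 / (p - 1) * (p - 2)) * A ^ (1 / (p - 1)) = A := by
          rw [← Real.rpow_add hA]
          rw [show 1 / (p - 1) * (p - 2) + 1 / (p - 1) = 1 by field_simp; ring]
          exact Real.rpow_one A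
        have hAval : A = |F ‖x‖| * ‖x‖ := by rw [hAdef, abs_mul, abs_of_pos hρ0]
        calc |g ‖x‖| ^ (p - 2) * (g ‖x‖ * ‖x‖⁻¹)
            = A ^ (1 / (p - 1) * (p - 2)) *
              (Real.sign (F ‖x‖) * A ^ (1 / (p - 1)) * ‖x‖⁻¹) := by
              rw [habsg, hgval, Real.rpow_mul hA.le]
          _ = Real.sign (F ‖x‖) *
              (A ^ (1 / (p - 1) * (p - 2)) * A ^ (1 / (p - 1))) * ‖x‖⁻¹ := by ring
          _ = Real.sign (F ‖x‖) * A * ‖x‖⁻¹ := by rw [hcomb]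
          _ = Real.sign (F ‖x‖) * |F ‖x‖| * (‖x‖ * ‖x‖⁻¹) := by rw [hAval]; ring
          _ = F ‖x‖ := by rw [sign_mul_abs_real, mul_inv_cancel₀ hρ0.ne', mul_one]
    rw [hsc]
  · -- part (iii)
    intro x hx1 hx2
    have hρ0 : 0 < ‖x‖ := lt_trans hR₂ hx1
    have hx0 : x ≠ 0 := fun h => by rw [h, norm_zero] at hρ0; exact lt_irrefl _ hρ0
    have hnormD := hasFDerivAt_norm_euclid x hx0
    have hwd : HasDerivAt (fun s => ∫ r in R₂..s, f r * r ^ (m + 1 - 1))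
        (f ‖x‖ * ‖x‖ ^ (m + 1 - 1)) ‖x‖ := by
      apply intervalIntegral.integral_hasDerivAt_right
      · apply ContinuousOn.intervalIntegrable
        apply hw.mono
        rw [uIcc_of_le hx1.le]
        exact Icc_subset_Icc le_rfl hx2.le
      · exact ContinuousAt.stronglyMeasurableAtFilter isOpen_Ioo
          (fun s hs => hw.continuousAt (Icc_mem_nhds hs.1 hs.2)) ‖x‖ ⟨hx1, hx2⟩
      · exact hw.continuousAt (Icc_mem_nhds hx1 hx2)
    have hNd : HasDerivAt (fun s => t * R₂ ^ (m + 1) - ∫ r in R₂..s, f r * r ^ (m + 1 - 1))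
        (-(f ‖x‖ * ‖x‖ ^ (m + 1 - 1))) ‖x‖ := hwd.const_sub _
    have hDd : HasDerivAt (fun s : ℝ => s ^ (m + 1))
        (((m + 1 : ℕ) : ℝ) * ‖x‖ ^ (m + 1 - 1)) ‖x‖ := hasDerivAt_pow (m + 1) ‖x‖
    obtain ⟨c, hFd, hpack⟩ : ∃ c : ℝ, HasDerivAt F c ‖x‖ ∧
        c * ‖x‖ + F ‖x‖ * ((m : ℝ) + 1) = -(f ‖x‖) := by
      refine ⟨_, by rw [hFeq]; exact hNd.div hDd (pow_ne_zero _ hρ0.ne'), ?_⟩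
      rw [hF]
      have hm : m + 1 - 1 = m := rfl
      rw [hm]
      set N : ℝ := t * R₂ ^ (m + 1) - ∫ r in R₂..‖x‖, f r * r ^ m with hN
      push_cast
      have hρne : ‖x‖ ≠ 0 := hρ0.ne'
      field_simp
      ring
    have hVg : HasFDerivAt (fun y : EuclideanSpace ℝ (Fin (m + 1)) => F ‖y‖)
        (c • (‖x‖⁻¹ • innerSL ℝ x)) x := hFd.comp_hasFDerivAt x hnormD
    have hV : HasFDerivAt (fun y : EuclideanSpace ℝ (Fin (m + 1)) => F ‖y‖ • y)
        (F ‖x‖ • ContinuousLinearMap.id ℝ (EuclideanSpace ℝ (Fin (m + 1))) +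
          (c • (‖x‖⁻¹ • innerSL ℝ x)).smulRight x) x := hVg.smul (hasFDerivAt_id x)
    refine ⟨hV.differentiableAt, ?_⟩
    rw [hV.fderiv]
    have h1 : (F ‖x‖ • ContinuousLinearMap.id ℝ (EuclideanSpace ℝ (Fin (m + 1))) +
        (c • (‖x‖⁻¹ • innerSL ℝ x)).smulRight x).toLinearMap
        = F ‖x‖ • (LinearMap.id : EuclideanSpace ℝ (Fin (m + 1)) →ₗ[ℝ]
            EuclideanSpace ℝ (Fin (m + 1))) +
          ((c • (‖x‖⁻¹ • innerSL ℝ x)).smulRight x).toLinearMap := by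
      ext y
      simp
    rw [h1, map_add, LinearMap.map_smul, LinearMap.trace_id, trace_smulRight_euclid]
    have h2 : (c • (‖x‖⁻¹ • innerSL ℝ x)) x = c * ‖x‖ := by
      simp only [ContinuousLinearMap.coe_smul', Pi.smul_apply, innerSL_apply_apply, smul_eq_mul,
        real_inner_self_eq_norm_sq]
      field_simp
    rw [h2, finrank_euclideanSpace_fin]
    rw [smul_eq_mul] at *
    push_cast
    linarith [hpack]
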